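/- There exists a universal constant C > 0 such that for every centered bivariate normal vector (X, Y) with unit variances and correlation ρ ∈ (−1, 1), and every t > 0, |Cov(1{|X| ≤ t}, 1{|Y| ≤ t})| ≤ C·|ρ|. -/

import Mathlib

open Real MeasureTheory ProbabilityTheory
open scoped ProbabilityTheory

noncomputable section

open scoped ENNReal NNReal

namespace Stmt16

def F (ρ : ℝ) (q : ℝ × ℝ) : ℝ :=
  (2 * π * Real.sqrt (1 - ρ ^ 2))⁻¹ *
    Real.exp (-(q.1 ^ 2 + q.2 ^ 2 - 2 * ρ * q.1 * q.2) / (2 * (1 - ρ ^ 2)))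

def f0 (q : ℝ × ℝ) : ℝ := (2 * π)⁻¹ * Real.exp (-(q.1 ^ 2 + q.2 ^ 2) / 2)

def D (q : ℝ × ℝ) : ℝ := 2 * Real.exp (-q.1 ^ 2 / 6) * Real.exp (-q.2 ^ 2 / 6)

def phi (x : ℝ) : ℝ := (Real.sqrt (2 * π))⁻¹ * Real.exp (-x ^ 2 / 2)

lemma int_exp6 : Integrable (fun x : ℝ => Real.exp (-x ^ 2 / 6)) volume := by
  have h := integrable_exp_neg_mul_sq (show (0:ℝ) < 1/6 by norm_num)
  refine h.congr (Filter.Eventually.of_forall fun x => ?_)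
  ring_nf

lemma val_exp6 : ∫ x : ℝ, Real.exp (-x ^ 2 / 6) = Real.sqrt (6 * π) := by
  have h := integral_gaussian (1/6 : ℝ)
  rw [show π / (1/6 : ℝ) = 6 * π by ring] at h
  rw [← h]
  congr 1 with x
  ring_nf

lemma intD : Integrable D volume := by
  have h : Integrable (fun z : ℝ × ℝ => (2 * Real.exp (-z.1 ^ 2 / 6)) * Real.exp (-z.2 ^ 2 / 6))
      (volume.prod volume) := (int_exp6.const_mul 2).mul_prod int_exp6
  rw [Measure.volume_eq_prod ℝ ℝ]
  exact h.congr (Filter.Eventually.of_forall fun z => rfl)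

lemma valD : ∫ q : ℝ × ℝ, D q = 12 * π := by
  rw [Measure.volume_eq_prod ℝ ℝ]
  have h : ∫ z : ℝ × ℝ, (2 * Real.exp (-z.1 ^ 2 / 6)) * Real.exp (-z.2 ^ 2 / 6)
        ∂(volume.prod volume)
      = (∫ x : ℝ, 2 * Real.exp (-x ^ 2 / 6)) * ∫ y : ℝ, Real.exp (-y ^ 2 / 6) :=
    integral_prod_mul (fun x => 2 * Real.exp (-x ^ 2 / 6)) (fun y => Real.exp (-y ^ 2 / 6))
  have : ∫ z : ℝ × ℝ, D z ∂(volume.prod volume)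
      = (∫ x : ℝ, 2 * Real.exp (-x ^ 2 / 6)) * ∫ y : ℝ, Real.exp (-y ^ 2 / 6) := by
    rw [← h]; rfl
  rw [this, integral_const_mul, val_exp6]
  have h6 : (0:ℝ) ≤ 6 * π := by positivity
  rw [show 2 * (Real.sqrt (6*π)) * Real.sqrt (6*π) = 2 * (Real.sqrt (6*π) * Real.sqrt (6*π)) by ring,
    Real.mul_self_sqrt h6]
  ring

lemma valD' : ∫ q : ℝ × ℝ, D q ≤ 38 := by
  rw [valD]; have := Real.pi_lt_d2; linarith

lemma D_nonneg (q : ℝ × ℝ) : 0 ≤ D q := by unfold D; positivity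

lemma int_phi : Integrable phi volume := by
  have h := integrable_exp_neg_mul_sq (show (0:ℝ) < 1/2 by norm_num)
  refine ((h.congr (Filter.Eventually.of_forall fun x => by ring_nf)).const_mul _).congr
    (Filter.Eventually.of_forall fun x => rfl)

lemma val_phi : ∫ x : ℝ, phi x = 1 := by
  unfold phi
  rw [integral_const_mul]
  have h := integral_gaussian (1/2 : ℝ)
  rw [show π / (1/2 : ℝ) = 2 * π by ring] at h
  have : ∫ x : ℝ, Real.exp (-x ^ 2 / 2) = Real.sqrt (2 * π) := by
    rw [← h]; congr 1 with x; ring_nf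
  rw [this, inv_mul_cancel₀ (by positivity : Real.sqrt (2*π) ≠ 0)]

lemma f0_eq (q : ℝ × ℝ) : f0 q = phi q.1 * phi q.2 := by
  unfold f0 phi
  rw [show -(q.1 ^ 2 + q.2 ^ 2) / 2 = (-q.1 ^ 2 / 2) + (-q.2 ^ 2 / 2) by ring, Real.exp_add]
  have : (Real.sqrt (2*π))⁻¹ * (Real.sqrt (2*π))⁻¹ = (2*π)⁻¹ := by
    rw [← mul_inv, Real.mul_self_sqrt (by positivity)]
  rw [← this]; ring

lemma intf0 : Integrable f0 volume := by
  rw [Measure.volume_eq_prod ℝ ℝ]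
  exact (int_phi.mul_prod int_phi).congr
    (Filter.Eventually.of_forall fun z => (f0_eq z).symm)

lemma f0_nonneg (q : ℝ × ℝ) : 0 ≤ f0 q := by
  unfold f0; positivity

lemma contF (ρ : ℝ) : Continuous (F ρ) := by
  unfold F; fun_prop


lemma abs_exp_sub_one (a : ℝ) : |Real.exp a - 1| ≤ |a| * Real.exp |a| := by
  rcases le_or_gt 0 a with h | h
  · rw [abs_of_nonneg h, abs_of_nonneg (sub_nonneg.2 (Real.one_le_exp h))]
    have h1 : 1 - a ≤ Real.exp (-a) := by have := Real.add_one_le_exp (-a); linarith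
    have h2 : (1 - a) * Real.exp a ≤ 1 := by
      calc (1 - a) * Real.exp a ≤ Real.exp (-a) * Real.exp a :=
            mul_le_mul_of_nonneg_right h1 (Real.exp_pos a).le
        _ = 1 := by rw [← Real.exp_add]; simp
    nlinarith [Real.exp_pos a]
  · rw [abs_of_neg h, abs_of_nonpos (sub_nonpos.2 (Real.exp_le_one_iff.2 h.le))]
    have h1 : 1 + a ≤ Real.exp a := by have := Real.add_one_le_exp a; linarith
    have h2 : 1 ≤ Real.exp (-a) := Real.one_le_exp (by linarith)
    nlinarith

set_option maxHeartbeats 1000000 in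
lemma pointwise {ρ : ℝ} (hρ : |ρ| ≤ 1/4) (q : ℝ × ℝ) :
    |F ρ q - f0 q| ≤ |ρ| * D q := by
  obtain ⟨x, y⟩ := q
  simp only [F, f0, D]
  have habs : 0 ≤ |ρ| := abs_nonneg ρ
  have hρ2 : ρ ^ 2 ≤ 1/16 := by have h := sq_abs ρ; nlinarith
  have h1 : (15:ℝ)/16 ≤ 1 - ρ ^ 2 := by linarith
  have h1' : (0:ℝ) < 1 - ρ ^ 2 := by linarith
  have h1'' : 1 - ρ ^ 2 ≤ 1 := by nlinarith [sq_nonneg ρ]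
  have hsq : 0 < Real.sqrt (1 - ρ ^ 2) := Real.sqrt_pos.2 h1'
  set s : ℝ := x ^ 2 + y ^ 2 with hs
  have hs0 : 0 ≤ s := by positivity
  set c : ℝ := (Real.sqrt (1 - ρ ^ 2))⁻¹ with hc
  have hc0 : 0 < c := inv_pos.2 hsq
  have hc1 : 1 ≤ c := one_le_inv_iff₀.2 ⟨hsq, Real.sqrt_le_one.2 h1''⟩
  have hsq_ge : 1 - ρ ^ 2 ≤ Real.sqrt (1 - ρ ^ 2) := by
    calc 1 - ρ ^ 2 = Real.sqrt ((1 - ρ ^ 2) ^ 2) := (Real.sqrt_sq h1'.le).symm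
      _ ≤ Real.sqrt (1 - ρ ^ 2) := Real.sqrt_le_sqrt (by nlinarith)
  have hcle : c ≤ 1 + 2 * ρ ^ 2 := by
    have h2 : c ≤ (1 - ρ ^ 2)⁻¹ := inv_anti₀ h1' hsq_ge
    have h3 : (1 - ρ ^ 2)⁻¹ * (1 - ρ ^ 2) = 1 := inv_mul_cancel₀ h1'.ne'
    have h4 : 0 < (1 - ρ ^ 2)⁻¹ := inv_pos.2 h1'
    nlinarith
  have hc2 : c ≤ 2 := by nlinarith
  set a : ℝ := ρ * (2 * x * y - ρ * s) * (2 * (1 - ρ ^ 2))⁻¹ with ha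
  -- rewrite F
  have hF : (2 * π * Real.sqrt (1 - ρ ^ 2))⁻¹ *
      Real.exp (-(x ^ 2 + y ^ 2 - 2 * ρ * x * y) / (2 * (1 - ρ ^ 2)))
      = (2 * π)⁻¹ * (Real.exp (-s/2) * (c * Real.exp a)) := by
    have hexp : -(x ^ 2 + y ^ 2 - 2 * ρ * x * y) / (2 * (1 - ρ ^ 2)) = -s/2 + a := by
      rw [ha, hs]; field_simp; ring
    rw [hexp, Real.exp_add, hc, mul_inv, mul_inv]
    have hπ : (0:ℝ) < π := Real.pi_pos
    ring
  rw [hF]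
  have hdiff : (2 * π)⁻¹ * (Real.exp (-s/2) * (c * Real.exp a)) -
      (2 * π)⁻¹ * Real.exp (-s / 2)
      = (2 * π)⁻¹ * Real.exp (-s/2) * (c * Real.exp a - 1) := by ring
  rw [show -(x ^ 2 + y ^ 2) / 2 = -s / 2 by rw [hs], hdiff, abs_mul, abs_mul]
  have hπ : (0:ℝ) < π := Real.pi_pos
  rw [abs_of_pos (by positivity : (0:ℝ) < (2 * π)⁻¹), abs_of_pos (Real.exp_pos _)]
  -- bound |2xy| ≤ s etc
  have hxy : |2 * x * y| ≤ s := by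
    rw [abs_le]; constructor <;> nlinarith [sq_nonneg (x+y), sq_nonneg (x-y)]
  have haa : |a| ≤ 2/3 * |ρ| * s := by
    rw [ha, abs_mul, abs_mul, abs_inv]
    have h5 : |2 * x * y - ρ * s| ≤ 5/4 * s := by
      have : |ρ * s| ≤ 1/4 * s := by
        rw [abs_mul, abs_of_nonneg hs0]; nlinarith
      calc |2 * x * y - ρ * s| ≤ |2 * x * y| + |ρ * s| := abs_sub _ _
        _ ≤ 5/4 * s := by linarith
    have h6 : |2 * (1 - ρ ^ 2)|⁻¹ ≤ 8/15 := by
      rw [abs_of_pos (by linarith : (0:ℝ) < 2 * (1 - ρ ^ 2))]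
      rw [inv_le_iff_one_le_mul₀ (by linarith)]
      linarith
    calc |ρ| * |2 * x * y - ρ * s| * |2 * (1 - ρ ^ 2)|⁻¹
        ≤ |ρ| * (5/4 * s) * (8/15) := by
          apply mul_le_mul (mul_le_mul le_rfl h5 (abs_nonneg _) habs) h6
            (by positivity) (by positivity)
      _ = 2/3 * |ρ| * s := by ring
  have haa6 : |a| ≤ s/6 := by nlinarith
  -- bound |c exp a - 1|
  have hkey : |c * Real.exp a - 1| ≤ 4/3 * |ρ| * s * Real.exp (s/6) + 2 * ρ ^ 2 := by
    have e1 : c * Real.exp a - 1 = c * (Real.exp a - 1) + (c - 1) := by ring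
    have e2 : |c * Real.exp a - 1| ≤ c * |Real.exp a - 1| + (c - 1) := by
      rw [e1]
      calc |c * (Real.exp a - 1) + (c - 1)| ≤ |c * (Real.exp a - 1)| + |c - 1| := abs_add_le _ _
        _ = c * |Real.exp a - 1| + (c - 1) := by
            rw [abs_mul, abs_of_pos hc0, abs_of_nonneg (show (0:ℝ) ≤ c - 1 by linarith)]
    have e3 : |Real.exp a - 1| ≤ |a| * Real.exp |a| := abs_exp_sub_one a
    have e4 : Real.exp |a| ≤ Real.exp (s/6) := Real.exp_le_exp.2 haa6
    have e5 : |a| * Real.exp |a| ≤ (2/3 * |ρ| * s) * Real.exp (s/6) :=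
      mul_le_mul haa e4 (Real.exp_pos _).le (by positivity)
    calc |c * Real.exp a - 1| ≤ c * (|a| * Real.exp |a|) + (c - 1) := by
          have h7 := mul_le_mul_of_nonneg_left e3 hc0.le
          linarith
      _ ≤ 2 * ((2/3 * |ρ| * s) * Real.exp (s/6)) + 2 * ρ ^ 2 := by
          have h8 := mul_le_mul hc2 e5 (by positivity) (by norm_num : (0:ℝ) ≤ 2)
          linarith
      _ = 4/3 * |ρ| * s * Real.exp (s/6) + 2 * ρ ^ 2 := by ring
  -- final numeric estimate
  have hRHS : 2 * Real.exp (-x ^ 2 / 6) * Real.exp (-y ^ 2 / 6) = 2 * Real.exp (-s/6) := by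
    rw [mul_assoc, ← Real.exp_add]; rw [hs]; ring_nf
  rw [hRHS]
  set u : ℝ := Real.exp (-s/6) with hu
  set v : ℝ := Real.exp (s/6) with hv
  have hu0 : 0 < u := Real.exp_pos _
  have hv0 : 0 < v := Real.exp_pos _
  have huv : u * v = 1 := by rw [hu, hv, ← Real.exp_add]; ring_nf; exact Real.exp_zero
  have hu1 : u ≤ 1 := Real.exp_le_one_iff.2 (by linarith)
  have hE2 : Real.exp (-s/2) = u * u * u := by
    rw [hu, ← Real.exp_add, ← Real.exp_add]; ring_nf
  have hsv : s ≤ 6 * v := by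
    have := Real.add_one_le_exp (s/6)
    rw [← hv] at this; linarith
  have hρ4 : ρ ^ 2 ≤ |ρ| / 4 := by have h := sq_abs ρ; nlinarith
  have h2pi : (2 * π)⁻¹ ≤ 1/6 := by
    rw [inv_le_iff_one_le_mul₀ (by positivity)]
    have := Real.pi_gt_three; linarith
  have key1 : s * ((u * u) * u) * v ≤ 6 * u := by
    calc s * ((u * u) * u) * v = s * (u * u) * (u * v) := by ring
      _ = s * (u * u) := by rw [huv, mul_one]
      _ ≤ (6 * v) * (u * u) := mul_le_mul_of_nonneg_right hsv (by positivity)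
      _ = 6 * u * (u * v) := by ring
      _ = 6 * u := by rw [huv, mul_one]
  have key2 : (u * u) * u ≤ u := by nlinarith
  have key3 : 2 * ρ ^ 2 * ((u * u) * u) ≤ 2 * (|ρ|/4) * u := by
    have h9 : 0 ≤ (u * u) * u := by positivity
    have := mul_le_mul hρ4 key2 h9 (by positivity)
    nlinarith
  calc (2 * π)⁻¹ * Real.exp (-s/2) * |c * Real.exp a - 1|
      ≤ (2 * π)⁻¹ * Real.exp (-s/2) * (4/3 * |ρ| * s * v + 2 * ρ ^ 2) :=
        mul_le_mul_of_nonneg_left hkey (by positivity)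
    _ = (2 * π)⁻¹ * (4/3 * |ρ| * (s * ((u * u) * u) * v) + 2 * ρ ^ 2 * ((u * u) * u)) := by
        rw [hE2]; ring
    _ ≤ (1/6) * (4/3 * |ρ| * (6 * u) + 2 * (|ρ|/4) * u) := by
        apply mul_le_mul h2pi ?_ ?_ (by norm_num)
        · exact add_le_add (mul_le_mul_of_nonneg_left key1 (by positivity)) key3
        · positivity
    _ ≤ |ρ| * (2 * u) := by nlinarith [mul_nonneg habs hu0.le]


lemma F_nonneg (ρ : ℝ) (q : ℝ × ℝ) : 0 ≤ F ρ q := by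
  unfold F; positivity

lemma intF {ρ : ℝ} (hρ : |ρ| ≤ 1/4) : Integrable (F ρ) volume := by
  have hb : Integrable (fun q : ℝ × ℝ => f0 q + |ρ| * D q) volume :=
    intf0.add (intD.const_mul _)
  refine hb.mono' (contF ρ).aestronglyMeasurable (Filter.Eventually.of_forall fun q => ?_)
  have h1 := (abs_le.1 (pointwise hρ q)).2
  have h2 := F_nonneg ρ q
  rw [Real.norm_eq_abs, abs_of_nonneg h2]
  linarith

lemma diff_le {ρ : ℝ} (hρ : |ρ| ≤ 1/4) (E : Set (ℝ × ℝ)) :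
    |(∫ q in E, F ρ q) - ∫ q in E, f0 q| ≤ 38 * |ρ| := by
  have hFi : IntegrableOn (F ρ) E volume := (intF hρ).integrableOn
  have hf0i : IntegrableOn f0 E volume := intf0.integrableOn
  have hDi : IntegrableOn (fun q : ℝ × ℝ => |ρ| * D q) E volume :=
    (intD.const_mul _).integrableOn
  rw [← integral_sub hFi hf0i]
  have habsint : |∫ q in E, (F ρ q - f0 q)| ≤ ∫ q in E, |F ρ q - f0 q| := by
    simpa [Real.norm_eq_abs] using
      norm_integral_le_integral_norm (μ := volume.restrict E) (fun q => F ρ q - f0 q)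
  calc |∫ q in E, (F ρ q - f0 q)| ≤ ∫ q in E, |F ρ q - f0 q| := habsint
    _ ≤ ∫ q in E, |ρ| * D q :=
        integral_mono (hFi.sub hf0i).abs hDi (fun q => pointwise hρ q)
    _ ≤ ∫ q : ℝ × ℝ, |ρ| * D q :=
        setIntegral_le_integral (intD.const_mul _)
          (Filter.Eventually.of_forall fun q => mul_nonneg (abs_nonneg _) (D_nonneg q))
    _ = |ρ| * ∫ q : ℝ × ℝ, D q := integral_const_mul _ _
    _ ≤ |ρ| * 38 := mul_le_mul_of_nonneg_left valD' (abs_nonneg ρ)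
    _ = 38 * |ρ| := by ring

lemma core {ρ : ℝ} (hρ : |ρ| ≤ 1/4) (t : ℝ) :
    |(∫ q in Set.Icc (-t) t ×ˢ Set.Icc (-t) t, F ρ q) -
      (∫ q in Set.Icc (-t) t ×ˢ (Set.univ : Set ℝ), F ρ q) *
      (∫ q in (Set.univ : Set ℝ) ×ˢ Set.Icc (-t) t, F ρ q)| ≤ 500 * |ρ| := by
  have hphi_nn : ∀ x : ℝ, 0 ≤ phi x := fun x => by unfold phi; positivity
  set p : ℝ := ∫ x in Set.Icc (-t) t, phi x with hpdef
  have hp0 : 0 ≤ p := setIntegral_nonneg measurableSet_Icc fun x _ => hphi_nn x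
  have hp1 : p ≤ 1 := by
    rw [hpdef, ← val_phi]
    exact setIntegral_le_integral int_phi (Filter.Eventually.of_forall hphi_nn)
  have hS : (∫ q in Set.Icc (-t) t ×ˢ Set.Icc (-t) t, f0 q) = p * p := by
    simp only [f0_eq]
    exact setIntegral_prod_mul phi phi _ _
  have hA : (∫ q in Set.Icc (-t) t ×ˢ (Set.univ : Set ℝ), f0 q) = p := by
    simp only [f0_eq]
    have h := setIntegral_prod_mul (μ := volume) (ν := volume) phi phi
      (Set.Icc (-t) t) (Set.univ)
    rw [setIntegral_univ, val_phi, mul_one] at h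
    exact h
  have hB : (∫ q in (Set.univ : Set ℝ) ×ˢ Set.Icc (-t) t, f0 q) = p := by
    simp only [f0_eq]
    have h := setIntegral_prod_mul (μ := volume) (ν := volume) phi phi
      (Set.univ) (Set.Icc (-t) t)
    rw [setIntegral_univ, val_phi, one_mul] at h
    exact h
  set IS : ℝ := ∫ q in Set.Icc (-t) t ×ˢ Set.Icc (-t) t, F ρ q
  set IA : ℝ := ∫ q in Set.Icc (-t) t ×ˢ (Set.univ : Set ℝ), F ρ q
  set IB : ℝ := ∫ q in (Set.univ : Set ℝ) ×ˢ Set.Icc (-t) t, F ρ q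
  have e1 : |IS - p * p| ≤ 38 * |ρ| := by
    have h := diff_le hρ (Set.Icc (-t) t ×ˢ Set.Icc (-t) t); rw [hS] at h; exact h
  have e2 : |IA - p| ≤ 38 * |ρ| := by
    have h := diff_le hρ (Set.Icc (-t) t ×ˢ (Set.univ : Set ℝ)); rw [hA] at h; exact h
  have e3 : |IB - p| ≤ 38 * |ρ| := by
    have h := diff_le hρ ((Set.univ : Set ℝ) ×ˢ Set.Icc (-t) t); rw [hB] at h; exact h
  have habs : 0 ≤ |ρ| := abs_nonneg ρ
  have hpabs : |p| ≤ 1 := abs_le.2 ⟨by linarith, hp1⟩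
  have hd : IS - IA * IB
      = (IS - p * p) - (p * (IB - p) + (IA - p) * p + (IA - p) * (IB - p)) := by ring
  rw [hd]
  calc |(IS - p * p) - (p * (IB - p) + (IA - p) * p + (IA - p) * (IB - p))|
      ≤ |IS - p * p| + |p * (IB - p) + (IA - p) * p + (IA - p) * (IB - p)| := abs_sub _ _
    _ ≤ |IS - p * p| + (|p * (IB - p)| + |(IA - p) * p| + |(IA - p) * (IB - p)|) := by
        have g1 := abs_add_le (p * (IB - p) + (IA - p) * p) ((IA - p) * (IB - p))
        have g2 := abs_add_le (p * (IB - p)) ((IA - p) * p)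
        linarith
    _ ≤ 38 * |ρ| + (1 * (38 * |ρ|) + (38 * |ρ|) * 1 + (38 * |ρ|) * (38 * |ρ|)) := by
        rw [abs_mul, abs_mul, abs_mul]
        have g3 : |p| * |IB - p| ≤ 1 * (38 * |ρ|) :=
          mul_le_mul hpabs e3 (abs_nonneg _) zero_le_one
        have g4 : |IA - p| * |p| ≤ (38 * |ρ|) * 1 :=
          mul_le_mul e2 hpabs (abs_nonneg _) (by linarith)
        have g5 : |IA - p| * |IB - p| ≤ (38 * |ρ|) * (38 * |ρ|) :=
          mul_le_mul e2 e3 (abs_nonneg _) (by linarith)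
        linarith
    _ ≤ 500 * |ρ| := by nlinarith


end Stmt16

/-- there is a universal constant `C > 0` such that for every centered
bivariate normal vector `(X, Y)` with unit variances and correlation `ρ ∈ (−1, 1)`
(i.e. with joint density `f_ρ`) and every `t > 0`,
`|Cov(1{|X| ≤ t}, 1{|Y| ≤ t})| ≤ C |ρ|`. -/
theorem stmt16 :
    ∃ C : ℝ, 0 < C ∧
    ∀ (Ω : Type) [MeasureSpace Ω] [IsProbabilityMeasure (ℙ : Measure Ω)]
      (u v : Ω → ℝ) (ρ t : ℝ), ρ ∈ Set.Ioo (-1 : ℝ) 1 → 0 < t →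
      Measure.map (fun ω => (u ω, v ω)) ℙ =
        (volume : Measure (ℝ × ℝ)).withDensity
          (fun q => ENNReal.ofReal
            ((2 * π * Real.sqrt (1 - ρ ^ 2))⁻¹ *
              Real.exp (-(q.1 ^ 2 + q.2 ^ 2 - 2 * ρ * q.1 * q.2) / (2 * (1 - ρ ^ 2))))) →
      |(∫ ω, (if |u ω| ≤ t then (1 : ℝ) else 0) * (if |v ω| ≤ t then (1 : ℝ) else 0)
          ∂(ℙ : Measure Ω)) -
        (∫ ω, (if |u ω| ≤ t then (1 : ℝ) else 0) ∂(ℙ : Measure Ω)) *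
        (∫ ω, (if |v ω| ≤ t then (1 : ℝ) else 0) ∂(ℙ : Measure Ω))| ≤ C * |ρ| := by

  refine ⟨500, by norm_num, ?_⟩
  intro Ω _ _ u v ρ t hρmem ht hmap
  by_cases hsmall : |ρ| ≤ 1/4
  case neg =>
    -- trivial bound using that all integrals lie in [0,1]
    push_neg at hsmall
    have bnd : ∀ f : Ω → ℝ, (∀ ω, 0 ≤ f ω) → (∀ ω, f ω ≤ 1) →
        0 ≤ (∫ ω, f ω ∂(ℙ : Measure Ω)) ∧ (∫ ω, f ω ∂(ℙ : Measure Ω)) ≤ 1 := by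
      intro f h0 h1
      refine ⟨integral_nonneg h0, ?_⟩
      by_cases hi : Integrable f (ℙ : Measure Ω)
      · calc ∫ ω, f ω ∂(ℙ : Measure Ω) ≤ ∫ _ : Ω, (1:ℝ) ∂(ℙ : Measure Ω) :=
            integral_mono hi (integrable_const 1) h1
          _ = 1 := by simp
      · rw [integral_undef hi]; norm_num
    obtain ⟨a0, a1⟩ := bnd
      (fun ω => (if |u ω| ≤ t then (1 : ℝ) else 0) * (if |v ω| ≤ t then (1 : ℝ) else 0))
      (fun ω => by split_ifs <;> norm_num)
      (fun ω => by split_ifs <;> norm_num)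
    obtain ⟨b0, b1⟩ := bnd (fun ω => (if |u ω| ≤ t then (1 : ℝ) else 0))
      (fun ω => by split_ifs <;> norm_num)
      (fun ω => by split_ifs <;> norm_num)
    obtain ⟨c0, c1⟩ := bnd (fun ω => (if |v ω| ≤ t then (1 : ℝ) else 0))
      (fun ω => by split_ifs <;> norm_num)
      (fun ω => by split_ifs <;> norm_num)
    rw [abs_le]
    constructor <;> nlinarith
  case pos =>
    have hmap' : Measure.map (fun ω => (u ω, v ω)) (ℙ : Measure Ω) =
        (volume : Measure (ℝ × ℝ)).withDensity
          (fun q => ENNReal.ofReal (Stmt16.F ρ q)) := hmap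
    have hρ1 : 0 < 1 - ρ ^ 2 := by
      obtain ⟨h1, h2⟩ := hρmem
      nlinarith
    have hFpos : ∀ q : ℝ × ℝ, 0 < Stmt16.F ρ q := by
      intro q
      unfold Stmt16.F
      have hsq : 0 < Real.sqrt (1 - ρ ^ 2) := Real.sqrt_pos.2 hρ1
      have hπ := Real.pi_pos
      positivity
    have hFmeas : Measurable (Stmt16.F ρ) := (Stmt16.contF ρ).measurable
    -- the pair map is a.e. measurable
    have hpair : AEMeasurable (fun ω => (u ω, v ω)) (ℙ : Measure Ω) := by
      by_contra hc
      rw [Measure.map_of_not_aemeasurable hc] at hmap'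
      have h0 : (0 : Measure (ℝ × ℝ)) Set.univ =
          ((volume : Measure (ℝ × ℝ)).withDensity
            (fun q => ENNReal.ofReal (Stmt16.F ρ q))) Set.univ := by rw [hmap']
      rw [withDensity_apply _ MeasurableSet.univ, setLIntegral_univ] at h0
      have hpos : 0 < ∫⁻ q, ENNReal.ofReal (Stmt16.F ρ q) := by
        rw [lintegral_pos_iff_support hFmeas.ennreal_ofReal]
        have hsupp : (Function.support fun q => ENNReal.ofReal (Stmt16.F ρ q)) = Set.univ := by
          ext q
          simp only [Function.mem_support, Set.mem_univ, iff_true, ne_eq,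
            ENNReal.ofReal_eq_zero, not_le]
          exact hFpos q
        rw [hsupp]
        have hsq : (0:ℝ≥0∞) < volume (Set.Icc (0:ℝ) 1 ×ˢ Set.Icc (0:ℝ) 1) := by
          rw [Measure.volume_eq_prod ℝ ℝ, Measure.prod_prod]
          simp [Real.volume_Icc]
        exact lt_of_lt_of_le hsq (measure_mono (Set.subset_univ _))
      simp only [Measure.coe_zero, Pi.zero_apply] at h0
      exact hpos.ne' h0.symm
    -- convert the three integrals to set integrals of the density
    have convI : ∀ g : ℝ × ℝ → ℝ, Measurable g →
        (∫ ω, g (u ω, v ω) ∂(ℙ : Measure Ω)) = ∫ q, Stmt16.F ρ q * g q := by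
      intro g hg
      rw [← integral_map hpair hg.aestronglyMeasurable, hmap']
      have : (fun q : ℝ × ℝ => ENNReal.ofReal (Stmt16.F ρ q)) =
          (fun q : ℝ × ℝ => ((Stmt16.F ρ q).toNNReal : ℝ≥0∞)) := rfl
      rw [this, integral_withDensity_eq_integral_smul hFmeas.real_toNNReal g]
      congr 1 with q
      rw [NNReal.smul_def, smul_eq_mul, Real.coe_toNNReal _ (Stmt16.F_nonneg ρ q)]
    have hg1 : Measurable (fun q : ℝ × ℝ => if |q.1| ≤ t then (1:ℝ) else 0) :=
      Measurable.ite (measurableSet_le measurable_fst.abs measurable_const)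
        measurable_const measurable_const
    have hg2 : Measurable (fun q : ℝ × ℝ => if |q.2| ≤ t then (1:ℝ) else 0) :=
      Measurable.ite (measurableSet_le measurable_snd.abs measurable_const)
        measurable_const measurable_const
    have key1 : (∫ ω, (if |u ω| ≤ t then (1 : ℝ) else 0) * (if |v ω| ≤ t then (1 : ℝ) else 0)
          ∂(ℙ : Measure Ω))
        = ∫ q in Set.Icc (-t) t ×ˢ Set.Icc (-t) t, Stmt16.F ρ q := by
      rw [convI (fun q => (if |q.1| ≤ t then (1:ℝ) else 0) * (if |q.2| ≤ t then (1:ℝ) else 0))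
        (hg1.mul hg2)]
      rw [← integral_indicator (measurableSet_Icc.prod measurableSet_Icc)]
      congr 1 with q
      simp only [Set.indicator_apply, Set.mem_prod, Set.mem_Icc, ← abs_le]
      by_cases h1 : |q.1| ≤ t <;> by_cases h2 : |q.2| ≤ t <;> simp [h1, h2]
    have key2 : (∫ ω, (if |u ω| ≤ t then (1 : ℝ) else 0) ∂(ℙ : Measure Ω))
        = ∫ q in Set.Icc (-t) t ×ˢ (Set.univ : Set ℝ), Stmt16.F ρ q := by
      rw [convI (fun q => (if |q.1| ≤ t then (1:ℝ) else 0)) hg1]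
      rw [← integral_indicator (measurableSet_Icc.prod MeasurableSet.univ)]
      congr 1 with q
      simp only [Set.indicator_apply, Set.mem_prod, Set.mem_Icc, Set.mem_univ, and_true, ← abs_le]
      by_cases h1 : |q.1| ≤ t <;> simp [h1]
    have key3 : (∫ ω, (if |v ω| ≤ t then (1 : ℝ) else 0) ∂(ℙ : Measure Ω))
        = ∫ q in (Set.univ : Set ℝ) ×ˢ Set.Icc (-t) t, Stmt16.F ρ q := by
      rw [convI (fun q => (if |q.2| ≤ t then (1:ℝ) else 0)) hg2]
      rw [← integral_indicator (MeasurableSet.univ.prod measurableSet_Icc)]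
      congr 1 with q
      simp only [Set.indicator_apply, Set.mem_prod, Set.mem_Icc, Set.mem_univ, true_and, ← abs_le]
      by_cases h2 : |q.2| ≤ t <;> simp [h2]
    rw [key1, key2, key3]
    exact Stmt16.core hsmall t
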